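/- Let X and Y be complex Banach spaces and let (R(t))_{t>0} be a strongly continuous family of bounded linear operators from X to Y satisfying ‖R(t)‖_{L(X,Y)} ≤ M/(1+t^γ) for all t > 0, where γ > 1 and M > 0. If g : ℝ → X is equi-Weyl-1-almost periodic and Stepanov 1-bounded, then for every t ∈ ℝ the integral G(t) := ∫_{−∞}^t R(t−s) g(s) ds converges absolutely, and the function G : ℝ → Y is bounded, continuous, and equi-Weyl-1-almost periodic. -/

import Mathlib

open MeasureTheory Filter Set
open scoped ENNReal NNReal Topology

noncomputable section

/-- Local `p`-integrability of `f` on the set `I`. -/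
def LocLpOn {X : Type*} [NormedAddCommGroup X] (p : ℝ) (I : Set ℝ) (f : ℝ → X) : Prop :=
  AEStronglyMeasurable f (volume.restrict I) ∧
    MeasureTheory.LocallyIntegrableOn (fun t => ‖f t‖ ^ p) I volume

/-- The Stepanov `p`-norm of `f` over the set `I`, as an extended nonnegative real. -/
def SpNorm {X : Type*} [NormedAddCommGroup X] (p : ℝ) (I : Set ℝ) (f : ℝ → X) : ℝ≥0∞ :=
  ⨆ t ∈ I, ENNReal.ofReal ((∫ s in t..t + 1, ‖f s‖ ^ p) ^ (1 / p))

/-- The Stepanov distance `D_{S_l}^p[f,g]` over the set `I`, as an extended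
nonnegative real. -/
def DS {X : Type*} [NormedAddCommGroup X] (p l : ℝ) (I : Set ℝ) (f g : ℝ → X) : ℝ≥0∞ :=
  ⨆ x ∈ I, ENNReal.ofReal (((1 / l) * ∫ t in x..x + l, ‖f t - g t‖ ^ p) ^ (1 / p))

/-- `f` is equi-Weyl-`p`-almost periodic on `I`. -/
def EquiWeylAP {X : Type*} [NormedAddCommGroup X] (p : ℝ) (I : Set ℝ) (f : ℝ → X) : Prop :=
  ∀ ε : ℝ, 0 < ε → ∃ l : ℝ, 0 < l ∧ ∃ L : ℝ, 0 < L ∧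
    ∀ a : ℝ, Set.Icc a (a + L) ⊆ I →
      ∃ τ ∈ Set.Icc a (a + L), DS p l I (fun t => f (t + τ)) f ≤ ENNReal.ofReal ε

/-- `f` is Weyl-`p`-almost periodic on `I`. -/
def WeylAP {X : Type*} [NormedAddCommGroup X] (p : ℝ) (I : Set ℝ) (f : ℝ → X) : Prop :=
  ∀ ε : ℝ, 0 < ε → ∃ L : ℝ, 0 < L ∧
    ∀ a : ℝ, Set.Icc a (a + L) ⊆ I →
      ∃ τ ∈ Set.Icc a (a + L),
        Filter.limsup (fun l => DS p l I (fun t => f (t + τ)) f) Filter.atTop ≤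
          ENNReal.ofReal ε

/-- `f` is Stepanov `p`-almost periodic on `I`. -/
def StepanovAP {X : Type*} [NormedAddCommGroup X] (p : ℝ) (I : Set ℝ) (f : ℝ → X) : Prop :=
  ∀ ε : ℝ, 0 < ε → ∃ L : ℝ, 0 < L ∧
    ∀ a : ℝ, Set.Icc a (a + L) ⊆ I →
      ∃ τ ∈ Set.Icc a (a + L),
        ∀ t ∈ I, (∫ s in t..t + 1, ‖f (s + τ) - f s‖ ^ p) ^ (1 / p) ≤ ε

/-- `v` belongs to `C_0([0,∞) : Y)`: continuous on `[0,∞)` and vanishing at `+∞`. -/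
def CZero {Y : Type*} [NormedAddCommGroup Y] (v : ℝ → Y) : Prop :=
  ContinuousOn v (Set.Ici (0 : ℝ)) ∧
    Filter.Tendsto (fun t => ‖v t‖) Filter.atTop (nhds 0)

/-- `f` is Stepanov `p`-vanishing (as a function on `[0,∞)`). -/
def SpVanishing {Y : Type*} [NormedAddCommGroup Y] (p : ℝ) (f : ℝ → Y) : Prop :=
  SpNorm p (Set.Ici 0) f < ⊤ ∧
    Filter.Tendsto (fun t => ∫ s in t..t + 1, ‖f s‖ ^ p) Filter.atTop (nhds 0)

/-- `f` is equi-Weyl-`p`-vanishing (as a function on `[0,∞)`):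
`lim_{l→∞} limsup_{t→∞} sup_{x≥0} ((1/l)∫_x^{x+l} ‖f(t+s)‖^p ds)^{1/p} = 0`. -/
def EquiWeylVanishing {Y : Type*} [NormedAddCommGroup Y] (p : ℝ) (f : ℝ → Y) : Prop :=
  Filter.Tendsto (fun l : ℝ =>
      Filter.limsup (fun t : ℝ =>
          ⨆ x ∈ Set.Ici (0 : ℝ),
            ENNReal.ofReal (((1 / l) * ∫ s in x..x + l, ‖f (t + s)‖ ^ p) ^ (1 / p)))
        Filter.atTop)
    Filter.atTop (nhds 0)

/-- `f` is Weyl-`p`-vanishing (as a function on `[0,∞)`):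
`lim_{t→∞} limsup_{l→∞} sup_{x≥0} ((1/l)∫_x^{x+l} ‖f(t+s)‖^p ds)^{1/p} = 0`. -/
def WeylVanishing {Y : Type*} [NormedAddCommGroup Y] (p : ℝ) (f : ℝ → Y) : Prop :=
  Filter.Tendsto (fun t : ℝ =>
      Filter.limsup (fun l : ℝ =>
          ⨆ x ∈ Set.Ici (0 : ℝ),
            ENNReal.ofReal (((1 / l) * ∫ s in x..x + l, ‖f (t + s)‖ ^ p) ^ (1 / p)))
        Filter.atTop)
    Filter.atTop (nhds 0)

section AuxiliaryLemmas

private lemma sum_weights {M γ : ℝ} (hM : 0 ≤ M) (hγ : 1 < γ) :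
    Summable fun k : ℕ => M / (1 + (k : ℝ) ^ γ) := by
  rw [← summable_nat_add_iff 1]
  have h0 : Summable fun n : ℕ => M * (((n : ℝ)) ^ γ)⁻¹ :=
    (Real.summable_nat_rpow_inv.2 hγ).mul_left M
  have h1 : Summable fun n : ℕ => M * ((((n : ℝ)) + 1) ^ γ)⁻¹ := by
    have := (summable_nat_add_iff (f := fun n : ℕ => M * (((n : ℝ)) ^ γ)⁻¹) 1).2 h0
    simpa using this
  refine h1.of_nonneg_of_le (fun n => div_nonneg hM (by positivity)) fun n => ?_
  have hp : (0:ℝ) < ((n : ℝ) + 1) ^ γ := Real.rpow_pos_of_pos (by positivity) γ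
  have hle : M / (1 + ((n : ℝ) + 1) ^ γ) ≤ M / (((n : ℝ) + 1) ^ γ) := by
    gcongr
    linarith
  calc M / (1 + (((n + 1 : ℕ)) : ℝ) ^ γ) = M / (1 + ((n : ℝ) + 1) ^ γ) := by push_cast; ring_nf
    _ ≤ M / (((n : ℝ) + 1) ^ γ) := hle
    _ = M * ((((n : ℝ)) + 1) ^ γ)⁻¹ := by rw [div_eq_mul_inv]

private lemma iUnion_Ioc_Iic (t : ℝ) :
    (⋃ k : ℕ, Ioc (t - ((k : ℝ) + 1)) (t - (k : ℝ))) = Iic t := by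
  ext s
  simp only [mem_iUnion, mem_Ioc, mem_Iic]
  constructor
  · rintro ⟨k, _, h2⟩
    have : (0:ℝ) ≤ (k:ℝ) := Nat.cast_nonneg k
    linarith
  · intro hs
    refine ⟨⌊t - s⌋₊, ?_, ?_⟩
    · have := Nat.lt_floor_add_one (t - s); linarith
    · have := Nat.floor_le (sub_nonneg.2 hs); linarith

private lemma key_lintegral_bound {M γ : ℝ} (hM : 0 ≤ M) (hγ : 1 < γ)
    (h : ℝ → ℝ≥0∞) (CE : ℝ≥0∞) (hh : ∀ a : ℝ, ∫⁻ s in Ioc a (a + 1), h s ≤ CE) (t : ℝ) :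
    ∫⁻ s in Iic t, ENNReal.ofReal (M / (1 + ((t - s) ⊔ 0) ^ γ)) * h s ≤
      (∑' k : ℕ, ENNReal.ofReal (M / (1 + (k : ℝ) ^ γ))) * CE := by
  rw [← iUnion_Ioc_Iic t, ← ENNReal.tsum_mul_right]
  refine (lintegral_iUnion_le _ _).trans (ENNReal.tsum_le_tsum fun k => ?_)
  have h1 : ∫⁻ s in Ioc (t - ((k:ℝ)+1)) (t - (k:ℝ)),
      ENNReal.ofReal (M / (1 + ((t - s) ⊔ 0) ^ γ)) * h s ≤
      ∫⁻ s in Ioc (t - ((k:ℝ)+1)) (t - (k:ℝ)), ENNReal.ofReal (M / (1 + (k:ℝ) ^ γ)) * h s := by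
    refine setLIntegral_mono' measurableSet_Ioc fun s hs => ?_
    have hk0 : (0:ℝ) ≤ (k:ℝ) := Nat.cast_nonneg k
    have hks : (k:ℝ) ≤ t - s := by have := hs.2; linarith
    have hmax : (t - s) ⊔ 0 = t - s := max_eq_left (by linarith)
    refine mul_le_mul_left (ENNReal.ofReal_le_ofReal ?_) _
    rw [hmax]
    have hr : (k:ℝ) ^ γ ≤ (t - s) ^ γ := Real.rpow_le_rpow hk0 hks (by linarith)
    gcongr
  refine h1.trans ?_
  rw [lintegral_const_mul' _ _ ENNReal.ofReal_ne_top]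
  refine mul_le_mul_right ?_ _
  rw [show t - (k:ℝ) = (t - ((k:ℝ)+1)) + 1 by ring]
  exact hh _

private lemma joint_cont {X Y : Type*} [NormedAddCommGroup X] [NormedSpace ℂ X]
    [NormedAddCommGroup Y] [NormedSpace ℂ Y] {M : ℝ}
    (R : ℝ → X →L[ℂ] Y) (hRsc : ∀ x : X, ContinuousOn (fun t => R t x) (Ioi (0:ℝ)))
    (hRM : ∀ r : ℝ, 0 < r → ‖R r‖ ≤ M) :
    ContinuousOn (fun p : ℝ × X => R p.1 p.2) (Ioi (0:ℝ) ×ˢ (univ : Set X)) := by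
  rintro ⟨r₀, x₀⟩ ⟨hr₀, -⟩
  have h1 : Tendsto (fun p : ℝ × X => R p.1 x₀)
      (𝓝[Ioi (0:ℝ) ×ˢ (univ : Set X)] (r₀, x₀)) (𝓝 (R r₀ x₀)) := by
    have hfst : Tendsto (fun p : ℝ × X => p.1)
        (𝓝[Ioi (0:ℝ) ×ˢ (univ : Set X)] (r₀, x₀)) (𝓝[Ioi (0:ℝ)] r₀) := by
      apply tendsto_nhdsWithin_of_tendsto_nhds_of_eventually_within
      · exact (continuous_fst.tendsto _).mono_left nhdsWithin_le_nhds
      · exact eventually_mem_nhdsWithin.mono fun p hp => hp.1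
    exact ((hRsc x₀ r₀ hr₀).tendsto).comp hfst
  have h2 : Tendsto (fun p : ℝ × X => R p.1 (p.2 - x₀))
      (𝓝[Ioi (0:ℝ) ×ˢ (univ : Set X)] (r₀, x₀)) (𝓝 0) := by
    have hb : Tendsto (fun p : ℝ × X => M * ‖p.2 - x₀‖)
        (𝓝[Ioi (0:ℝ) ×ˢ (univ : Set X)] (r₀, x₀)) (𝓝 0) := by
      have hc : Continuous (fun p : ℝ × X => M * ‖p.2 - x₀‖) :=
        continuous_const.mul ((continuous_snd.sub continuous_const).norm)
      have := (hc.tendsto (r₀, x₀)).mono_left (nhdsWithin_le_nhds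
        (s := Ioi (0:ℝ) ×ˢ (univ : Set X)))
      simpa using this
    refine squeeze_zero_norm' ?_ hb
    filter_upwards [eventually_mem_nhdsWithin] with p hp
    calc ‖R p.1 (p.2 - x₀)‖ ≤ ‖R p.1‖ * ‖p.2 - x₀‖ := (R p.1).le_opNorm _
      _ ≤ M * ‖p.2 - x₀‖ := mul_le_mul_of_nonneg_right (hRM _ hp.1) (norm_nonneg _)
  have h3 := h1.add h2
  rw [add_zero] at h3
  refine Tendsto.congr (fun p => ?_) h3
  rw [← map_add]
  congr 1
  abel

private lemma conv_aesm {X Y : Type*} [NormedAddCommGroup X] [NormedSpace ℂ X]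
    [NormedAddCommGroup Y] [NormedSpace ℂ Y] {M : ℝ}
    (R : ℝ → X →L[ℂ] Y) (hRsc : ∀ x : X, ContinuousOn (fun t => R t x) (Ioi (0:ℝ)))
    (hRM : ∀ r : ℝ, 0 < r → ‖R r‖ ≤ M)
    (g : ℝ → X) (hg : AEStronglyMeasurable g volume) (t : ℝ) :
    AEStronglyMeasurable (fun s => R (t - s) (g s)) (volume.restrict (Iic t)) := by
  have hjc := joint_cont R hRsc hRM
  set c : ℕ → ℝ := fun n => 1 / ((n : ℝ) + 1) with hcdef
  have hc : ∀ n, (0:ℝ) < c n := fun n => by positivity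
  have hFn : ∀ n : ℕ, AEStronglyMeasurable (fun s => R (max (t - s) (c n)) (g s))
      (volume.restrict (Iic t)) := by
    intro n
    have hcont : Continuous (fun p : ℝ × X => R (max p.1 (c n)) p.2) := by
      rw [← continuousOn_univ]
      refine hjc.comp (Continuous.continuousOn
        ((continuous_fst.max continuous_const).prodMk continuous_snd)) ?_
      intro p _
      exact ⟨lt_of_lt_of_le (hc n) (le_max_right _ _), mem_univ _⟩
    exact hcont.comp_aestronglyMeasurable
      (((measurable_const.sub measurable_id).aestronglyMeasurable).prodMk hg.restrict)
  have hlt : ∀ᵐ s ∂volume.restrict (Iic t), s < t := by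
    rw [← Measure.restrict_congr_set Iio_ae_eq_Iic]
    exact ae_restrict_mem measurableSet_Iio
  refine aestronglyMeasurable_of_tendsto_ae atTop hFn ?_
  filter_upwards [hlt] with s hs
  have hpos : 0 < t - s := sub_pos.2 hs
  have hev : ∀ᶠ n : ℕ in atTop, c n ≤ t - s :=
    tendsto_one_div_add_atTop_nhds_zero_nat.eventually (eventually_le_nhds hpos)
  refine tendsto_const_nhds.congr' ?_
  filter_upwards [hev] with n hn
  rw [max_eq_left hn]

end AuxiliaryLemmas

/-- Theorem 2.1 (equi-Weyl case, `p = 1`, `β = 1`): invariance of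
equi-Weyl-`1`-almost periodicity under the infinite convolution product. -/
theorem weyl_convolution_equi_one {X Y : Type*}
    [NormedAddCommGroup X] [NormedSpace ℂ X] [CompleteSpace X]
    [NormedAddCommGroup Y] [NormedSpace ℂ Y] [CompleteSpace Y]
    (M γ : ℝ) (hM : 0 < M) (hγ : 1 < γ)
    (R : ℝ → X →L[ℂ] Y)
    (hRsc : ∀ x : X, ContinuousOn (fun t => R t x) (Set.Ioi (0 : ℝ)))
    (hR : ∀ t : ℝ, 0 < t → ‖R t‖ ≤ M / (1 + t ^ γ))
    (g : ℝ → X) (hgloc : LocLpOn 1 Set.univ g)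
    (hgap : EquiWeylAP 1 Set.univ g)
    (hgS : SpNorm 1 Set.univ g < ⊤)
    (G : ℝ → Y) (hG : ∀ t : ℝ, G t = ∫ s in Set.Iic t, R (t - s) (g s)) :
    (∀ t : ℝ, IntegrableOn (fun s => R (t - s) (g s)) (Set.Iic t) volume) ∧
      (∃ C : ℝ, ∀ t : ℝ, ‖G t‖ ≤ C) ∧ Continuous G ∧ EquiWeylAP 1 Set.univ G := by
  have hM0 : 0 ≤ M := hM.le
  have hγ0 : 0 ≤ γ := by linarith
  -- measurability of `g`
  have hg_aesm : AEStronglyMeasurable g volume := by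
    have := hgloc.1; rwa [Measure.restrict_univ] at this
  have hgnorm_loc : LocallyIntegrable (fun s => ‖g s‖) volume := by
    have := hgloc.2
    rw [MeasureTheory.locallyIntegrableOn_univ] at this
    simpa [Real.rpow_one] using this
  have hg_loc : LocallyIntegrable g volume := by
    rw [MeasureTheory.locallyIntegrable_iff]
    intro K hK
    exact (hgnorm_loc.integrableOn_isCompact hK).mono' hg_aesm.restrict
      (ae_of_all _ fun s => le_rfl)
  have hgIoc : ∀ a b : ℝ, IntegrableOn g (Ioc a b) volume := fun a b =>
    (hg_loc.integrableOn_isCompact isCompact_Icc).mono_set Ioc_subset_Icc_self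
  -- Stepanov bound in `ℝ≥0∞`
  set CE : ℝ≥0∞ := SpNorm 1 univ g with hCEdef
  have hCEtop : CE ≠ ⊤ := hgS.ne
  have hgC : ∀ a : ℝ, ∫⁻ s in Ioc a (a+1), ENNReal.ofReal ‖g s‖ ≤ CE := by
    intro a
    have hint : IntegrableOn g (Ioc a (a+1)) volume := hgIoc a (a+1)
    have h1 : ∫⁻ s in Ioc a (a+1), ENNReal.ofReal ‖g s‖
        = ENNReal.ofReal (∫ s in Ioc a (a+1), ‖g s‖) := by
      rw [ofReal_integral_norm_eq_lintegral_enorm hint]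
      simp [ofReal_norm]
    rw [h1, hCEdef]
    have h2 : ∫ s in Ioc a (a+1), ‖g s‖ = (∫ s in a..a+1, ‖g s‖ ^ (1:ℝ)) ^ (1/(1:ℝ)) := by
      simp [Real.rpow_one, intervalIntegral.integral_of_le (by linarith : a ≤ a+1)]
    rw [h2]
    exact le_iSup₂ (f := fun (t : ℝ) (_ : t ∈ (univ : Set ℝ)) =>
      ENNReal.ofReal ((∫ s in t..t + 1, ‖g s‖ ^ (1:ℝ)) ^ (1 / (1:ℝ)))) a (mem_univ a)
  -- the weight
  set w : ℝ → ℝ≥0∞ := fun r => ENNReal.ofReal (M / (1 + (r ⊔ 0) ^ γ)) with hwdef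
  set SγE : ℝ≥0∞ := ∑' k : ℕ, ENNReal.ofReal (M / (1 + (k:ℝ)^γ)) with hSγdef
  have hSγtop : SγE ≠ ⊤ := by
    rw [hSγdef, ← ENNReal.ofReal_tsum_of_nonneg
      (fun k => div_nonneg hM0 (by positivity)) (sum_weights hM0 hγ)]
    exact ENNReal.ofReal_ne_top
  have hRM : ∀ r : ℝ, 0 < r → ‖R r‖ ≤ M := by
    intro r hr
    refine (hR r hr).trans (div_le_self hM0 ?_)
    have : (0:ℝ) ≤ r ^ γ := Real.rpow_nonneg hr.le γ
    linarith
  have hae_lt : ∀ t : ℝ, ∀ᵐ s ∂volume.restrict (Iic t), s < t := by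
    intro t
    rw [← Measure.restrict_congr_set Iio_ae_eq_Iic]
    exact ae_restrict_mem measurableSet_Iio
  -- operator bound, pointwise
  have hRb : ∀ {t s : ℝ}, s < t → ∀ v : X,
      ENNReal.ofReal ‖R (t-s) v‖ ≤ w (t-s) * ENNReal.ofReal ‖v‖ := by
    intro t s hst v
    rw [hwdef]
    dsimp only
    rw [← ENNReal.ofReal_mul (by positivity)]
    apply ENNReal.ofReal_le_ofReal
    have h1 : (t - s) ⊔ 0 = t - s := max_eq_left (by linarith)
    rw [h1]
    calc ‖R (t-s) v‖ ≤ ‖R (t-s)‖ * ‖v‖ := (R (t-s)).le_opNorm v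
      _ ≤ M / (1 + (t-s)^γ) * ‖v‖ :=
        mul_le_mul_of_nonneg_right (hR _ (by linarith)) (norm_nonneg _)
  -- the generic convolution lintegral bound
  have hconv_bound : ∀ (h : ℝ → X) (CE' : ℝ≥0∞),
      (∀ a : ℝ, ∫⁻ s in Ioc a (a+1), ENNReal.ofReal ‖h s‖ ≤ CE') →
      ∀ t : ℝ, ∫⁻ s in Iic t, ENNReal.ofReal ‖R (t-s) (h s)‖ ≤ SγE * CE' := by
    intro h CE' hh t
    calc ∫⁻ s in Iic t, ENNReal.ofReal ‖R (t-s) (h s)‖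
        ≤ ∫⁻ s in Iic t, w (t-s) * ENNReal.ofReal ‖h s‖ := by
          refine lintegral_mono_ae ?_
          filter_upwards [hae_lt t] with s hs
          exact hRb hs (h s)
      _ ≤ SγE * CE' := by
          rw [hSγdef]
          exact key_lintegral_bound hM0 hγ (fun s => ENNReal.ofReal ‖h s‖) CE' hh t
  -- (1) integrability
  have haesm : ∀ t : ℝ, AEStronglyMeasurable (fun s => R (t-s) (g s))
      (volume.restrict (Iic t)) := conv_aesm R hRsc hRM g hg_aesm
  have hfinb : ∀ t : ℝ, ∫⁻ s in Iic t, ENNReal.ofReal ‖R (t-s) (g s)‖ ≤ SγE * CE :=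
    hconv_bound g CE hgC
  have hSCE : SγE * CE < ⊤ := ENNReal.mul_lt_top hSγtop.lt_top hCEtop.lt_top
  have hint : ∀ t : ℝ, IntegrableOn (fun s => R (t - s) (g s)) (Iic t) volume := by
    intro t
    refine ⟨haesm t, ?_⟩
    rw [hasFiniteIntegral_iff_norm]
    exact lt_of_le_of_lt (hfinb t) hSCE
  -- (2) boundedness
  have hGb : ∀ t : ℝ, ‖G t‖ ≤ (SγE * CE).toReal := by
    intro t
    rw [hG t]
    refine le_trans (norm_integral_le_integral_norm _) ?_
    have h0 : 0 ≤ ∫ s in Iic t, ‖R (t-s) (g s)‖ := integral_nonneg fun s => norm_nonneg _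
    have h1 : ENNReal.ofReal (∫ s in Iic t, ‖R (t-s) (g s)‖) ≤ SγE * CE := by
      rw [ofReal_integral_norm_eq_lintegral_enorm (hint t)]
      refine le_trans (le_of_eq ?_) (hfinb t)
      simp [ofReal_norm]
    calc ∫ s in Iic t, ‖R (t-s) (g s)‖
        = (ENNReal.ofReal (∫ s in Iic t, ‖R (t-s) (g s)‖)).toReal :=
          (ENNReal.toReal_ofReal h0).symm
      _ ≤ (SγE * CE).toReal := ENNReal.toReal_mono hSCE.ne h1
  -- substitution helpers
  have hpre_add : ∀ (b τ : ℝ), (fun s : ℝ => s + τ) ⁻¹' (Iic (b + τ)) = Iic b := by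
    intro b τ; ext s
    simp only [mem_preimage, mem_Iic]
    constructor <;> intro h <;> linarith
  have hGshift : ∀ t τ : ℝ, G (t + τ) = ∫ s in Iic t, R (t - s) (g (s + τ)) := by
    intro t τ
    rw [hG]
    have h := (measurePreserving_add_right volume τ).setIntegral_preimage_emb
      (measurableEmbedding_addRight τ) (fun s => R (t + τ - s) (g s)) (Iic (t + τ))
    rw [hpre_add t τ] at h
    rw [← h]
    exact setIntegral_congr_fun measurableSet_Iic fun s _ => by
      rw [add_sub_add_right_eq_sub]
  have hmp_restrict : ∀ (b τ : ℝ), MeasurePreserving (fun s : ℝ => s + τ)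
      (volume.restrict (Iic b)) (volume.restrict (Iic (b + τ))) := by
    intro b τ
    have := (measurePreserving_add_right volume τ).restrict_preimage_emb
      (measurableEmbedding_addRight τ) (Iic (b + τ))
    rwa [hpre_add b τ] at this
  have hint_shift : ∀ t τ : ℝ, IntegrableOn (fun s => R (t - s) (g (s + τ))) (Iic t) volume := by
    intro t τ
    have h0 := hint (t + τ)
    have h1 := ((hmp_restrict t τ).integrable_comp_emb (measurableEmbedding_addRight τ)).2 h0
    have h2 : ((fun s => R (t + τ - s) (g s)) ∘ (fun s : ℝ => s + τ))
        = fun s => R (t - s) (g (s + τ)) := by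
      funext s; simp [Function.comp, add_sub_add_right_eq_sub]
    rwa [h2] at h1
  -- (3) continuity
  have hGcont : Continuous G := by
    rw [continuous_iff_continuousAt]
    intro t₀
    set F : ℝ → ℝ → Y := fun t => (Iio t).indicator (fun s => R (t - s) (g s)) with hFdef
    have hFG : ∀ t : ℝ, ∫ s, F t s = G t := by
      intro t
      simp only [hFdef]
      rw [integral_indicator measurableSet_Iio, hG t]
      exact setIntegral_congr_set Iio_ae_eq_Iic
    set wt : ℝ → ℝ := fun s => M / (1 + ((t₀ - 1 - s) ⊔ 0) ^ γ) with hwtdef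
    have hwcont : Continuous wt := by
      apply continuous_const.div
      · exact continuous_const.add ((Real.continuous_rpow_const hγ0).comp
          ((continuous_const.sub continuous_id).max continuous_const))
      · intro s; positivity
    have hwt_nonneg : ∀ s, 0 ≤ wt s := fun s => by simp only [hwtdef]; positivity
    set bound : ℝ → ℝ := (Iic (t₀ + 1)).indicator (fun s => wt s * ‖g s‖) with hbdef
    have hbound_nonneg : ∀ s, 0 ≤ bound s := fun s =>
      Set.indicator_nonneg (fun s _ => mul_nonneg (hwt_nonneg s) (norm_nonneg _)) s
    have hbound_int : Integrable bound volume := by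
      constructor
      · exact (hwcont.aestronglyMeasurable.mul hg_aesm.norm).indicator measurableSet_Iic
      · rw [hasFiniteIntegral_iff_norm]
        have heq : ∀ s : ℝ, ENNReal.ofReal ‖bound s‖
            = (Iic (t₀ + 1)).indicator
              (fun s => ENNReal.ofReal (wt s) * ENNReal.ofReal ‖g s‖) s := by
          intro s
          simp only [hbdef]
          by_cases hs : s ∈ Iic (t₀ + 1)
          · rw [Set.indicator_of_mem hs, Set.indicator_of_mem hs,
              Real.norm_of_nonneg (mul_nonneg (hwt_nonneg s) (norm_nonneg _)),
              ENNReal.ofReal_mul (hwt_nonneg s)]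
          · rw [Set.indicator_of_notMem hs, Set.indicator_of_notMem hs]
            simp
        calc ∫⁻ s, ENNReal.ofReal ‖bound s‖
            = ∫⁻ s in Iic (t₀ + 1), ENNReal.ofReal (wt s) * ENNReal.ofReal ‖g s‖ := by
              rw [lintegral_congr heq, lintegral_indicator measurableSet_Iic]
          _ ≤ SγE * CE + ENNReal.ofReal M * (CE + CE) := by
              rw [← Iic_union_Ioc_eq_Iic (by linarith : t₀ - 1 ≤ t₀ + 1)]
              refine (lintegral_union_le _ _ _).trans (add_le_add ?_ ?_)
              · refine le_trans (le_of_eq ?_)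
                  (key_lintegral_bound hM0 hγ (fun s => ENNReal.ofReal ‖g s‖) CE hgC (t₀ - 1))
                exact lintegral_congr fun s => rfl
              · calc ∫⁻ s in Ioc (t₀ - 1) (t₀ + 1), ENNReal.ofReal (wt s) * ENNReal.ofReal ‖g s‖
                    ≤ ∫⁻ s in Ioc (t₀ - 1) (t₀ + 1), ENNReal.ofReal M * ENNReal.ofReal ‖g s‖ := by
                      refine lintegral_mono fun s => ?_
                      refine mul_le_mul_left (ENNReal.ofReal_le_ofReal ?_) _
                      simp only [hwtdef]
                      refine div_le_self hM0 ?_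
                      have : (0:ℝ) ≤ ((t₀ - 1 - s) ⊔ 0) ^ γ :=
                        Real.rpow_nonneg (le_max_right _ _) γ
                      linarith
                  _ = ENNReal.ofReal M * ∫⁻ s in Ioc (t₀ - 1) (t₀ + 1), ENNReal.ofReal ‖g s‖ :=
                      lintegral_const_mul' _ _ ENNReal.ofReal_ne_top
                  _ ≤ ENNReal.ofReal M * (CE + CE) := by
                      refine mul_le_mul_right ?_ _
                      rw [← Ioc_union_Ioc_eq_Ioc (by linarith : t₀ - 1 ≤ t₀)
                        (by linarith : t₀ ≤ t₀ + 1)]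
                      refine (lintegral_union_le _ _ _).trans (add_le_add ?_ ?_)
                      · have := hgC (t₀ - 1)
                        rwa [show t₀ - 1 + 1 = t₀ by ring] at this
                      · have := hgC t₀
                        rwa [show t₀ + 1 = t₀ + 1 by ring] at this
          _ < ⊤ := by
              refine ENNReal.add_lt_top.2 ⟨hSCE, ENNReal.mul_lt_top ENNReal.ofReal_lt_top ?_⟩
              exact ENNReal.add_lt_top.2 ⟨hCEtop.lt_top, hCEtop.lt_top⟩
    have hFmeas : ∀ᶠ t in 𝓝 t₀, AEStronglyMeasurable (F t) volume := by
      refine Eventually.of_forall fun t => ?_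
      simp only [hFdef]
      rw [aestronglyMeasurable_indicator_iff measurableSet_Iio,
        Measure.restrict_congr_set Iio_ae_eq_Iic]
      exact haesm t
    have hbd : ∀ᶠ t in 𝓝 t₀, ∀ᵐ s ∂(volume : Measure ℝ), ‖F t s‖ ≤ bound s := by
      filter_upwards [Ioo_mem_nhds (by linarith : t₀ - 1 < t₀) (by linarith : t₀ < t₀ + 1)]
        with t ht
      refine ae_of_all _ fun s => ?_
      by_cases hs : s ∈ Iio t
      · simp only [hFdef]
        rw [Set.indicator_of_mem hs]
        have hst : s < t := hs
        have hsmem : s ∈ Iic (t₀ + 1) := le_of_lt (lt_trans hst ht.2)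
        simp only [hbdef]
        rw [Set.indicator_of_mem hsmem]
        calc ‖R (t - s) (g s)‖ ≤ ‖R (t - s)‖ * ‖g s‖ := (R (t - s)).le_opNorm _
          _ ≤ M / (1 + (t - s) ^ γ) * ‖g s‖ :=
            mul_le_mul_of_nonneg_right (hR _ (by linarith)) (norm_nonneg _)
          _ ≤ wt s * ‖g s‖ := by
            refine mul_le_mul_of_nonneg_right ?_ (norm_nonneg _)
            simp only [hwtdef]
            have hb0 : (0:ℝ) ≤ (t₀ - 1 - s) ⊔ 0 := le_max_right _ _
            have hba : (t₀ - 1 - s) ⊔ 0 ≤ t - s := by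
              refine max_le (by linarith [ht.1]) (by linarith)
            have hrr : ((t₀ - 1 - s) ⊔ 0) ^ γ ≤ (t - s) ^ γ :=
              Real.rpow_le_rpow hb0 hba hγ0
            gcongr
      · simp only [hFdef]
        rw [Set.indicator_of_notMem hs]
        simpa using hbound_nonneg s
    have hlim : ∀ᵐ s ∂(volume : Measure ℝ),
        Tendsto (fun t => F t s) (𝓝 t₀) (𝓝 (F t₀ s)) := by
      have hsing : ∀ᵐ s : ℝ ∂volume, s ≠ t₀ := by
        have h0 : {s : ℝ | ¬ s ≠ t₀} = {t₀} := by ext s; simp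
        rw [ae_iff, h0]
        exact measure_singleton t₀
      filter_upwards [hsing] with s hs
      rcases lt_or_gt_of_ne hs with hlt | hgt
      · have hev : (fun t => F t s) =ᶠ[𝓝 t₀] (fun t => R (t - s) (g s)) := by
          filter_upwards [Ioi_mem_nhds hlt] with t ht
          simp only [hFdef]
          exact Set.indicator_of_mem (show s ∈ Iio t from ht) _
        have hFt₀ : F t₀ s = R (t₀ - s) (g s) := by
          simp only [hFdef]
          exact Set.indicator_of_mem (show s ∈ Iio t₀ from hlt) _
        rw [hFt₀]
        have hc : ContinuousAt (fun r => R r (g s)) (t₀ - s) :=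
          (hRsc (g s)).continuousAt (Ioi_mem_nhds (sub_pos.2 hlt))
        have hbase : Tendsto (fun t => R (t - s) (g s)) (𝓝 t₀) (𝓝 (R (t₀ - s) (g s))) :=
          Tendsto.comp hc ((continuous_sub_right s).tendsto t₀)
        exact hbase.congr' hev.symm
      · have hev : (fun t => F t s) =ᶠ[𝓝 t₀] (fun _ => (0 : Y)) := by
          filter_upwards [Iio_mem_nhds hgt] with t ht
          simp only [hFdef]
          exact Set.indicator_of_notMem (by simp only [mem_Iio, not_lt]; exact ht.le) _
        have hFt₀ : F t₀ s = 0 := by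
          simp only [hFdef]
          exact Set.indicator_of_notMem (by simp only [mem_Iio, not_lt]; exact hgt.le) _
        rw [hFt₀]
        exact tendsto_const_nhds.congr' hev.symm
    have hkey := tendsto_integral_filter_of_dominated_convergence (μ := volume)
      (F := F) (f := F t₀) bound hFmeas hbd hbound_int hlim
    rw [show (fun t => ∫ s, F t s) = G from funext hFG, hFG t₀] at hkey
    exact hkey
  -- (4) equi-Weyl almost periodicity
  refine ⟨hint, ⟨(SγE * CE).toReal, hGb⟩, hGcont, ?_⟩
  -- (4) equi-Weyl almost periodicity of `G`
  set Sr : ℝ := SγE.toReal with hSrdef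
  have hSr0 : 0 ≤ Sr := ENNReal.toReal_nonneg
  intro ε hε
  set ε' : ℝ := ε / (Sr + 1) with hε'def
  have hε' : 0 < ε' := by rw [hε'def]; positivity
  obtain ⟨l, hl, L, hL, hτ⟩ := hgap ε' hε'
  refine ⟨l, hl, L, hL, fun a _ => ?_⟩
  obtain ⟨τ, hτmem, hDS⟩ := hτ a (subset_univ _)
  refine ⟨τ, hτmem, ?_⟩
  -- extract the real Stepanov-distance bound for `g`
  simp only [DS] at hDS
  have hgDS : ∀ x : ℝ, ∫ u in x..x+l, ‖g (u+τ) - g u‖ ≤ l * ε' := by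
    intro x
    have h1 : ENNReal.ofReal (((1/l) * ∫ u in x..x+l, ‖g (u+τ) - g u‖ ^ (1:ℝ)) ^ (1/(1:ℝ)))
        ≤ ENNReal.ofReal ε' := by
      refine le_trans ?_ hDS
      exact le_iSup₂ (f := fun (x : ℝ) (_ : x ∈ (univ : Set ℝ)) =>
        ENNReal.ofReal (((1/l) * ∫ u in x..x+l, ‖g (u+τ) - g u‖ ^ (1:ℝ)) ^ (1/(1:ℝ)))) x
        (mem_univ x)
    rw [ENNReal.ofReal_le_ofReal_iff hε'.le] at h1
    simp only [Real.rpow_one, one_div_one, Real.rpow_natCast] at h1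
    have h2 : (1/l) * ∫ u in x..x+l, ‖g (u+τ) - g u‖ ≤ ε' := by
      have := h1
      simpa [Real.rpow_one] using this
    calc ∫ u in x..x+l, ‖g (u+τ) - g u‖
        = l * ((1/l) * ∫ u in x..x+l, ‖g (u+τ) - g u‖) := by
          field_simp
      _ ≤ l * ε' := mul_le_mul_of_nonneg_left h2 hl.le
  -- integrability of the difference on finite intervals
  have hΔint : ∀ x : ℝ, IntegrableOn (fun u => g (u+τ) - g u) (Ioc x (x+l)) volume := by
    intro x
    have h0 : IntegrableOn g (Ioc (x+τ) (x+l+τ)) volume := hgIoc _ _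
    have hpre : (fun u : ℝ => u + τ) ⁻¹' Ioc (x+τ) (x+l+τ) = Ioc x (x+l) := by
      ext u
      simp only [mem_preimage, mem_Ioc]
      constructor <;> rintro ⟨h1, h2⟩ <;> constructor <;> linarith
    have hmp : MeasurePreserving (fun u : ℝ => u + τ)
        (volume.restrict (Ioc x (x+l))) (volume.restrict (Ioc (x+τ) (x+l+τ))) := by
      have := (measurePreserving_add_right volume τ).restrict_preimage_emb
        (measurableEmbedding_addRight τ) (Ioc (x+τ) (x+l+τ))
      rwa [hpre] at this
    have h1 := (hmp.integrable_comp_emb (measurableEmbedding_addRight τ)).2 h0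
    exact (h1.sub (hgIoc x (x+l)))
  -- the lintegral version of the Stepanov-distance bound
  have hgDSl : ∀ x : ℝ, ∫⁻ u in Ioc x (x+l), ENNReal.ofReal ‖g (u+τ) - g u‖
      ≤ ENNReal.ofReal (l * ε') := by
    intro x
    have h1 : ∫⁻ u in Ioc x (x+l), ENNReal.ofReal ‖g (u+τ) - g u‖
        = ENNReal.ofReal (∫ u in Ioc x (x+l), ‖g (u+τ) - g u‖) := by
      rw [ofReal_integral_norm_eq_lintegral_enorm (hΔint x)]
      simp [ofReal_norm]
    rw [h1]
    apply ENNReal.ofReal_le_ofReal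
    rw [show (∫ u in Ioc x (x+l), ‖g (u+τ) - g u‖) = ∫ u in x..x+l, ‖g (u+τ) - g u‖ from
      (intervalIntegral.integral_of_le (by linarith : x ≤ x + l)).symm]
    exact hgDS x
  set Nτ : ℝ → ℝ≥0∞ := fun σ => ENNReal.ofReal ‖g (σ+τ) - g σ‖ with hNτdef
  -- pointwise bound for the difference of `G`
  have hGpt : ∀ t : ℝ, ENNReal.ofReal ‖G (t+τ) - G t‖ ≤ ∫⁻ s in Iic t, w (t-s) * Nτ s := by
    intro t
    have h1 := hint_shift t τ
    have h2 := hint t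
    have hsub : G (t+τ) - G t = ∫ s in Iic t, (R (t-s) (g (s+τ)) - R (t-s) (g s)) := by
      rw [hGshift t τ, hG t, integral_sub h1 h2]
    rw [hsub]
    calc ENNReal.ofReal ‖∫ s in Iic t, (R (t-s) (g (s+τ)) - R (t-s) (g s))‖
        ≤ ENNReal.ofReal (∫ s in Iic t, ‖R (t-s) (g (s+τ)) - R (t-s) (g s)‖) :=
          ENNReal.ofReal_le_ofReal (norm_integral_le_integral_norm _)
      _ = ∫⁻ s in Iic t, ENNReal.ofReal ‖R (t-s) (g (s+τ)) - R (t-s) (g s)‖ := by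
          have hintsub : Integrable (fun s => R (t-s) (g (s+τ)) - R (t-s) (g s))
              (volume.restrict (Iic t)) := by
            have := h1.sub h2
            exact this
          rw [ofReal_integral_norm_eq_lintegral_enorm hintsub]
          simp [ofReal_norm]
      _ ≤ ∫⁻ s in Iic t, w (t-s) * Nτ s := by
          refine lintegral_mono_ae ?_
          filter_upwards [hae_lt t] with s hs
          rw [show R (t-s) (g (s+τ)) - R (t-s) (g s) = R (t-s) (g (s+τ) - g s) from
            (map_sub _ _ _).symm]
          exact hRb hs _
  have hmp_sub : ∀ t : ℝ, MeasurePreserving (fun u : ℝ => t - u) volume volume := by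
    intro t
    have h := (measurePreserving_add_right volume t).comp
      (Measure.measurePreserving_neg (volume : Measure ℝ))
    have e : (fun u : ℝ => t - u) = (fun x => x + t) ∘ Neg.neg := by
      funext u; simp [sub_eq_neg_add]
    rw [e]; exact h
  -- substitution `u = t - s`
  have hsub1 : ∀ t : ℝ, ∫⁻ s in Iic t, w (t-s) * Nτ s = ∫⁻ u in Ici 0, w u * Nτ (t-u) := by
    intro t
    have hemb : MeasurableEmbedding (fun u : ℝ => t - u) :=
      (MeasurableEquiv.subLeft t).measurableEmbedding
    have hmp : MeasurePreserving (fun u : ℝ => t - u) volume volume :=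
      hmp_sub t
    have hpre : (fun u : ℝ => t - u) ⁻¹' (Iic t) = Ici 0 := by
      ext u
      simp only [mem_preimage, mem_Iic, mem_Ici]
      constructor <;> intro h <;> linarith
    have h := hmp.setLIntegral_comp_preimage_emb hemb (fun s => w (t-s) * Nτ s) (Iic t)
    rw [hpre] at h
    rw [← h]
    exact lintegral_congr fun u => by rw [sub_sub_cancel]
  -- measurable representative of `g`
  set g' : ℝ → X := hg_aesm.mk g with hg'def
  have hg'm : StronglyMeasurable g' := hg_aesm.stronglyMeasurable_mk
  have hgg' : g =ᵐ[volume] g' := hg_aesm.ae_eq_mk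
  set Nτ' : ℝ → ℝ≥0∞ := fun σ => ENNReal.ofReal ‖g' (σ+τ) - g' σ‖ with hNτ'def
  have hNae : Nτ =ᵐ[volume] Nτ' := by
    have h1 : (g ∘ fun σ : ℝ => σ + τ) =ᵐ[volume] (g' ∘ fun σ : ℝ => σ + τ) :=
      ((measurePreserving_add_right volume τ).quasiMeasurePreserving).ae_eq_comp hgg'
    filter_upwards [h1, hgg'] with σ h1 h2
    simp only [Function.comp] at h1
    simp only [hNτdef, hNτ'def, h1, h2]
  have hNτ'm : Measurable Nτ' := by
    have hsm : StronglyMeasurable (fun σ => ‖g' (σ+τ) - g' σ‖) :=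
      ((hg'm.comp_measurable (measurable_add_const τ)).sub hg'm).norm
    exact ENNReal.measurable_ofReal.comp hsm.measurable
  have hwm : Measurable w := by
    refine ENNReal.measurable_ofReal.comp (Continuous.measurable ?_)
    apply continuous_const.div
    · exact continuous_const.add ((Real.continuous_rpow_const hγ0).comp
        (continuous_id.max continuous_const))
    · intro r; positivity
  -- bound for the total weight
  have hWici : ∫⁻ u in Ici (0:ℝ), w u ≤ SγE := by
    have hh1 : ∀ a : ℝ, ∫⁻ _ in Ioc a (a+1), (1 : ℝ≥0∞) ≤ 1 := by
      intro a
      rw [setLIntegral_one]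
      simp [Real.volume_Ioc]
    have h := key_lintegral_bound hM0 hγ (fun _ => (1:ℝ≥0∞)) 1 hh1 0
    have hemb : MeasurableEmbedding (fun u : ℝ => (0:ℝ) - u) :=
      (MeasurableEquiv.subLeft 0).measurableEmbedding
    have hmp : MeasurePreserving (fun u : ℝ => (0:ℝ) - u) volume volume :=
      hmp_sub 0
    have hpre : (fun u : ℝ => (0:ℝ) - u) ⁻¹' (Iic 0) = Ici 0 := by
      ext u
      simp only [mem_preimage, mem_Iic, mem_Ici]
      constructor <;> intro hu <;> linarith
    have h2 := hmp.setLIntegral_comp_preimage_emb hemb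
      (fun s => ENNReal.ofReal (M / (1 + ((0 - s) ⊔ 0) ^ γ))) (Iic 0)
    rw [hpre] at h2
    calc ∫⁻ u in Ici (0:ℝ), w u
        = ∫⁻ u in Ici (0:ℝ), ENNReal.ofReal (M / (1 + (((0:ℝ) - (0 - u)) ⊔ 0) ^ γ)) := by
          refine lintegral_congr fun u => ?_
          rw [hwdef]
          norm_num
      _ = ∫⁻ s in Iic (0:ℝ), ENNReal.ofReal (M / (1 + (((0:ℝ) - s) ⊔ 0) ^ γ)) := h2
      _ ≤ SγE * 1 := by
          refine le_trans (le_of_eq (lintegral_congr fun s => (mul_one _).symm)) ?_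
          rw [hSγdef]
          exact h
      _ = SγE := mul_one _
  -- main estimate: fix `x` and bound the Stepanov distance of `G`
  simp only [DS]
  refine iSup₂_le fun x _ => ?_
  have hΔG : IntegrableOn (fun u => G (u+τ) - G u) (Ioc x (x+l)) volume := by
    refine Continuous.integrableOn_Ioc ?_
    exact (hGcont.comp (continuous_id.add continuous_const)).sub hGcont
  have hJ : ENNReal.ofReal (∫ u in Ioc x (x+l), ‖G (u+τ) - G u‖)
      ≤ SγE * ENNReal.ofReal (l * ε') := by
    rw [ofReal_integral_norm_eq_lintegral_enorm hΔG]
    calc ∫⁻ u in Ioc x (x+l), (‖G (u+τ) - G u‖₊ : ℝ≥0∞)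
        = ∫⁻ u in Ioc x (x+l), ENNReal.ofReal ‖G (u+τ) - G u‖ := by
          simp only [ofReal_norm, enorm_eq_nnnorm]
      _ ≤ ∫⁻ t in Ioc x (x+l), ∫⁻ u in Ici (0:ℝ), w u * Nτ' (t-u) := by
          refine lintegral_mono fun t => ?_
          calc ENNReal.ofReal ‖G (t+τ) - G t‖
              ≤ ∫⁻ s in Iic t, w (t-s) * Nτ s := hGpt t
            _ = ∫⁻ u in Ici (0:ℝ), w u * Nτ (t-u) := hsub1 t
            _ = ∫⁻ u in Ici (0:ℝ), w u * Nτ' (t-u) := by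
                refine lintegral_congr_ae (ae_restrict_of_ae ?_)
                have h1 : (Nτ ∘ fun u : ℝ => t - u) =ᵐ[volume] (Nτ' ∘ fun u : ℝ => t - u) :=
                  ((hmp_sub t).quasiMeasurePreserving).ae_eq_comp hNae
                filter_upwards [h1] with u hu
                simp only [Function.comp] at hu
                rw [hu]
      _ = ∫⁻ u in Ici (0:ℝ), ∫⁻ t in Ioc x (x+l), w u * Nτ' (t-u) := by
          refine lintegral_lintegral_swap ?_
          exact ((hwm.comp measurable_snd).mul
            (hNτ'm.comp (measurable_fst.sub measurable_snd))).aemeasurable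
      _ ≤ ∫⁻ u in Ici (0:ℝ), w u * ENNReal.ofReal (l * ε') := by
          refine lintegral_mono fun u => ?_
          rw [lintegral_const_mul' _ _ ENNReal.ofReal_ne_top]
          refine mul_le_mul_right ?_ _
          have hpre : (fun t : ℝ => t + (-u)) ⁻¹' (Ioc (x-u) ((x-u)+l)) = Ioc x (x+l) := by
            ext t
            simp only [mem_preimage, mem_Ioc]
            constructor <;> rintro ⟨h1, h2⟩ <;> constructor <;> linarith
          have hmpu := (measurePreserving_add_right volume (-u)).setLIntegral_comp_preimage_emb
            (measurableEmbedding_addRight (-u)) Nτ' (Ioc (x-u) ((x-u)+l))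
          rw [hpre] at hmpu
          calc ∫⁻ t in Ioc x (x+l), Nτ' (t-u)
              = ∫⁻ σ in Ioc (x-u) ((x-u)+l), Nτ' σ := by
                rw [← hmpu]
                exact lintegral_congr fun t => by rw [sub_eq_add_neg]
            _ = ∫⁻ σ in Ioc (x-u) ((x-u)+l), Nτ σ :=
                lintegral_congr_ae (ae_restrict_of_ae hNae.symm)
            _ ≤ ENNReal.ofReal (l * ε') := hgDSl (x-u)
      _ = (∫⁻ u in Ici (0:ℝ), w u) * ENNReal.ofReal (l * ε') :=
          lintegral_mul_const' _ _ ENNReal.ofReal_ne_top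
      _ ≤ SγE * ENNReal.ofReal (l * ε') := mul_le_mul_left hWici _
  -- pass to real numbers and conclude
  have h0 : 0 ≤ ∫ u in Ioc x (x+l), ‖G (u+τ) - G u‖ := integral_nonneg fun u => norm_nonneg _
  have h1 : ∫ u in Ioc x (x+l), ‖G (u+τ) - G u‖ ≤ Sr * (l * ε') := by
    have h2 := ENNReal.toReal_mono
      (ENNReal.mul_ne_top hSγtop ENNReal.ofReal_ne_top) hJ
    rwa [ENNReal.toReal_ofReal h0, ENNReal.toReal_mul,
      ENNReal.toReal_ofReal (by positivity : (0:ℝ) ≤ l * ε'), ← hSrdef] at h2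
  have hJr : ((1/l) * ∫ u in x..x+l, ‖G (u+τ) - G u‖ ^ (1:ℝ)) ^ (1/(1:ℝ)) ≤ ε := by
    rw [one_div_one, Real.rpow_one]
    simp only [Real.rpow_one]
    rw [intervalIntegral.integral_of_le (by linarith : x ≤ x + l)]
    have h3 : (1/l) * ∫ u in Ioc x (x+l), ‖G (u+τ) - G u‖ ≤ (1/l) * (Sr * (l * ε')) :=
      mul_le_mul_of_nonneg_left h1 (by positivity)
    have h4 : (1/l) * (Sr * (l * ε')) = Sr * ε' := by
      field_simp
    have h5 : Sr * ε' ≤ ε := by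
      rw [hε'def, mul_div_assoc']
      rw [div_le_iff₀ (by positivity : (0:ℝ) < Sr + 1)]
      nlinarith [hε.le, hSr0]
    calc (1/l) * ∫ u in Ioc x (x+l), ‖G (u+τ) - G u‖ ≤ (1/l) * (Sr * (l * ε')) := h3
      _ = Sr * ε' := h4
      _ ≤ ε := h5
  exact le_trans (ENNReal.ofReal_le_ofReal hJr) le_rfl
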